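/- Let P be a polytope, F a full flag of P, E an edge of P containing the vertex F_0, and L a face of P containing F_0. Then for any ν ∈ E^⊥: ν lies in the normal cone N_P(L) if and only if ν lies in the normal cone N_{P'}(supp_{P'}(L')), where P' = proj_{E^⊥} P and L' = proj_{E^⊥} L. -/

import Mathlib

open RealInnerProductSpace

noncomputable section

abbrev Euc (d : ℕ) := EuclideanSpace ℝ (Fin d)

/-- A polytope is the convex hull of a finite set of points. -/
def IsPolytope {d : ℕ} (P : Set (Euc d)) : Prop :=
  ∃ V : Set (Euc d), V.Finite ∧ P = convexHull ℝ V

/-- The dimension of a subset: the rank of its vector span (direction of its affine hull). -/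
noncomputable def sdim {d : ℕ} (F : Set (Euc d)) : ℕ :=
  Module.finrank ℝ (vectorSpan ℝ F)

/-- A full flag of a `k`-dimensional polytope `P`: a chain of nonempty faces,
one in each dimension `0, …, k-1`.  For indices `≥ k` the face is `P` itself by convention. -/
structure FullFlag {d : ℕ} (P : Set (Euc d)) (k : ℕ) where
  face : ℕ → Set (Euc d)
  exposed : ∀ i < k, IsExposed ℝ P (face i)
  nonempty : ∀ i < k, (face i).Nonempty
  dim_eq : ∀ i < k, sdim (face i) = i
  chain : ∀ i j : ℕ, i < j → j < k → face i ⊆ face j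
  top : ∀ i, k ≤ i → face i = P

/-- Orthogonal projection onto the complement of the direction of an edge `Eg`. -/
noncomputable def edgeProj {d : ℕ} (Eg : Set (Euc d)) (x : Euc d) : Euc d :=
  (Submodule.orthogonalProjection ((vectorSpan ℝ Eg)ᗮ) x : Euc d)

/-- `S = supp_Q A`: `S` is the minimal face of `Q` containing `A`. -/
def IsSuppFace {d : ℕ} (Q A S : Set (Euc d)) : Prop :=
  IsExposed ℝ Q S ∧ A ⊆ S ∧ ∀ T, IsExposed ℝ Q T → A ⊆ T → S ⊆ T

/-- The face of `P` in direction `ν`. -/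
def faceAt {d : ℕ} (P : Set (Euc d)) (ν : Euc d) : Set (Euc d) :=
  {x ∈ P | ∀ y ∈ P, ⟪y, ν⟫ ≤ ⟪x, ν⟫}

/-- The normal cone of a face `F` of `P`. -/
def normalCone {d : ℕ} (P F : Set (Euc d)) : Set (Euc d) :=
  {ν | F ⊆ faceAt P ν}

/-- For `ν ⊥ E`: `ν ∈ N_P(L)` iff `ν ∈ N_{P'}(supp_{P'} L')` where `P' = proj_{E^⊥} P` and
`L' = proj_{E^⊥} L`. -/
theorem stmt_19 {d : ℕ} (P : Set (Euc d)) (hP : IsPolytope P) (hPd : sdim P = d)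
    (F : FullFlag P d)
    (Eg : Set (Euc d)) (hE : IsExposed ℝ P Eg) (hEne : Eg.Nonempty) (hEdim : sdim Eg = 1)
    (hE0 : F.face 0 ⊆ Eg)
    (L : Set (Euc d)) (hL : IsExposed ℝ P L) (hLne : L.Nonempty) (hL0 : F.face 0 ⊆ L)
    (ν : Euc d) (hν : ν ∈ (vectorSpan ℝ Eg)ᗮ) :
    ∀ S : Set (Euc d), IsSuppFace (edgeProj Eg '' P) (edgeProj Eg '' L) S →
      (ν ∈ normalCone P L ↔ ν ∈ normalCone (edgeProj Eg '' P) S) := by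
  intro S hS
  obtain ⟨hSexp, hLS, hSmin⟩ := hS
  have key : ∀ x : Euc d, ⟪edgeProj Eg x, ν⟫ = ⟪x, ν⟫ := by
    intro x
    have hmem : x - edgeProj Eg x ∈ ((vectorSpan ℝ Eg)ᗮ)ᗮ :=
      Submodule.sub_starProjection_mem_orthogonal x
    have h0 : ⟪ν, x - edgeProj Eg x⟫ = 0 :=
      (Submodule.mem_orthogonal _ _).1 hmem ν hν
    have h1 : ⟪x - edgeProj Eg x, ν⟫ = 0 := by
      rw [real_inner_comm]; exact h0
    have h2 := inner_sub_left (𝕜 := ℝ) x (edgeProj Eg x) ν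
    rw [h1] at h2
    linarith
  constructor
  · intro h
    have hface : IsExposed ℝ (edgeProj Eg '' P) (faceAt (edgeProj Eg '' P) ν) := by
      intro _
      refine ⟨innerSL ℝ ν, ?_⟩
      ext x
      simp only [faceAt, Set.mem_setOf_eq, innerSL_apply_apply]
      constructor
      · rintro ⟨hx, hall⟩
        exact ⟨hx, fun y hy => by
          rw [real_inner_comm y ν, real_inner_comm x ν]; exact hall y hy⟩
      · rintro ⟨hx, hall⟩
        exact ⟨hx, fun y hy => by
          have := hall y hy
          rwa [real_inner_comm y ν, real_inner_comm x ν] at this⟩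
    have hsub : edgeProj Eg '' L ⊆ faceAt (edgeProj Eg '' P) ν := by
      rintro _ ⟨x, hx, rfl⟩
      have hx' := h hx
      refine ⟨⟨x, hx'.1, rfl⟩, ?_⟩
      rintro _ ⟨y, hy, rfl⟩
      rw [key x, key y]
      exact hx'.2 y hy
    exact hSmin _ hface hsub
  · intro h x hx
    have hx' : edgeProj Eg x ∈ faceAt (edgeProj Eg '' P) ν := h (hLS ⟨x, hx, rfl⟩)
    refine ⟨hL.subset hx, fun y hy => ?_⟩
    have := hx'.2 (edgeProj Eg y) ⟨y, hy, rfl⟩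
    rw [key x, key y] at this
    exact this
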